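/- For every real number x with 0 < x < 1, the infinite product ∏_{n=1}^∞ (1 - x^n)^{24} converges and equals exp(-24 · ∑_{m=1}^∞ (σ(m)/m)·x^m), where σ(m) denotes the sum of the positive divisors of m. -/

import Mathlib

/-- The sum of the positive divisors of `n`. -/
def sigma1 (n : ℕ) : ℕ := ∑ d ∈ n.divisors, d

open Finset in
lemma sum_inv_divisors (n : ℕ) (hn : n ≠ 0) :
    ∑ d ∈ n.divisors, (1 : ℝ) / d = (sigma1 n : ℝ) / n := by
  have h := Nat.sum_div_divisors (α := ℝ) n (fun d => (1 : ℝ) / d)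
  rw [← h, sigma1, Nat.cast_sum, Finset.sum_div]
  refine Finset.sum_congr rfl fun d hd => ?_
  have hdvd : d ∣ n := (Nat.mem_divisors.mp hd).1
  have hd0 : (d : ℝ) ≠ 0 := by
    exact_mod_cast (Nat.pos_of_mem_divisors hd).ne'
  have hn0 : (n : ℝ) ≠ 0 := by exact_mod_cast hn
  rw [Nat.cast_div hdvd hd0]
  field_simp

lemma shift_injOn : ∀ (S : Set (ℕ × ℕ)),
    Set.InjOn (fun p : ℕ × ℕ => (p.1 + 1, p.2 + 1)) S := by
  intro S p _ q _ h
  simp only [Prod.mk.injEq, Nat.add_right_cancel_iff] at h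
  exact Prod.ext h.1 h.2

/-- For `0 < x < 1`, the infinite product `∏_{n=1}^∞ (1 - x^n)^24` converges and equals
`exp(-24 · ∑_{m=1}^∞ (σ(m)/m)·x^m)`. -/
theorem prod_one_sub_pow_24 (x : ℝ) (hx0 : 0 < x) (hx1 : x < 1) :
    HasProd (fun n : ℕ => (1 - x ^ (n + 1)) ^ 24)
      (Real.exp (-24 * ∑' m : ℕ, (sigma1 (m + 1) : ℝ) / (m + 1) * x ^ (m + 1))) := by
  have hx0' : (0:ℝ) ≤ x := hx0.le
  set f : ℕ × ℕ → ℝ := fun p => x ^ ((p.1 + 1) * (p.2 + 1)) / (p.2 + 1) with hf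
  -- summability of f
  have hsum : Summable f := by
    have hgeo : Summable (fun n : ℕ => x ^ n) := summable_geometric_of_lt_one hx0' hx1
    have h2 : Summable (fun p : ℕ × ℕ => x ^ p.1 * x ^ p.2) :=
      Summable.mul_of_nonneg hgeo hgeo (fun n => pow_nonneg hx0' n)
        (fun n => pow_nonneg hx0' n)
    refine Summable.of_nonneg_of_le (fun p => ?_) (fun p => ?_) (h2.mul_left x)
    · positivity
    · calc f p ≤ x ^ ((p.1 + 1) * (p.2 + 1)) := by
            rw [hf]
            apply div_le_self (by positivity)
            exact_mod_cast Nat.succ_le_succ (Nat.zero_le p.2)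
        _ ≤ x ^ (p.1 + p.2 + 1) := by
            apply pow_le_pow_of_le_one hx0' hx1.le
            nlinarith [Nat.zero_le (p.1 * p.2)]
        _ = x * (x ^ p.1 * x ^ p.2) := by ring
  -- the fiber sums
  have fib : ∀ m : ℕ,
      ∑' p : (fun p : ℕ × ℕ => (p.1 + 1) * (p.2 + 1) - 1) ⁻¹' {m}, f p
        = (sigma1 (m + 1) : ℝ) / (m + 1) * x ^ (m + 1) := by
    intro m
    set s : Finset (ℕ × ℕ) :=
      (m + 1).divisorsAntidiagonal.preimage (fun p : ℕ × ℕ => (p.1 + 1, p.2 + 1))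
        (shift_injOn _) with hs
    have hset : ((fun p : ℕ × ℕ => (p.1 + 1) * (p.2 + 1) - 1) ⁻¹' {m} : Set (ℕ × ℕ)) = ↑s := by
      ext p
      simp only [Set.mem_preimage, Set.mem_singleton_iff, hs, Finset.coe_preimage,
        Finset.mem_coe, Nat.mem_divisorsAntidiagonal]
      have h1 : 0 < (p.1 + 1) * (p.2 + 1) := Nat.mul_pos (Nat.succ_pos _) (Nat.succ_pos _)
      omega
    rw [hset, Finset.tsum_subtype' s f]
    have hps : ∑ p ∈ s, f p
        = ∑ q ∈ (m + 1).divisorsAntidiagonal, x ^ (q.1 * q.2) / q.2 := by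
      rw [hs]
      refine Eq.trans (Finset.sum_congr rfl fun p _ => ?_)
        (Finset.sum_preimage (fun p : ℕ × ℕ => (p.1 + 1, p.2 + 1))
          ((m + 1).divisorsAntidiagonal) (shift_injOn _)
          (fun q => x ^ (q.1 * q.2) / q.2)
          (fun q hq hq' => by
            exfalso
            apply hq'
            obtain ⟨h1, h2⟩ := Nat.ne_zero_of_mem_divisorsAntidiagonal hq
            exact ⟨(q.1 - 1, q.2 - 1), Prod.ext (by simp; omega) (by simp; omega)⟩))
      simp only [hf]
      push_cast
      ring
    rw [hps]
    have : ∑ q ∈ (m + 1).divisorsAntidiagonal, x ^ (q.1 * q.2) / (q.2 : ℝ)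
        = ∑ q ∈ (m + 1).divisorsAntidiagonal, x ^ (m + 1) / (q.2 : ℝ) := by
      refine Finset.sum_congr rfl fun q hq => ?_
      rw [(Nat.mem_divisorsAntidiagonal.mp hq).1]
    rw [this, Nat.sum_divisorsAntidiagonal' (f := fun _ b => x ^ (m + 1) / (b : ℝ))]
    rw [show ∀ S : Finset ℕ, ∑ d ∈ S, x ^ (m + 1) / (d : ℝ)
        = x ^ (m + 1) * ∑ d ∈ S, (1 : ℝ) / d from fun S => by
          rw [Finset.mul_sum]; exact Finset.sum_congr rfl fun d _ => by ring]
    rw [sum_inv_divisors (m + 1) (Nat.succ_ne_zero m)]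
    push_cast
    ring
  -- fiberwise has-sum over m
  have key : HasSum (fun m : ℕ => (sigma1 (m + 1) : ℝ) / (m + 1) * x ^ (m + 1)) (∑' p, f p) := by
    have H := hsum.hasSum.tsum_fiberwise (fun p : ℕ × ℕ => (p.1 + 1) * (p.2 + 1) - 1)
    simpa only [fib] using H
  -- fiberwise has-sum over n : log series
  have hlog : ∀ n : ℕ, HasSum (fun k => f (n, k)) (-Real.log (1 - x ^ (n + 1))) := by
    intro n
    have hy : |x ^ (n + 1)| < 1 := by
      rw [abs_of_nonneg (pow_nonneg hx0' _)]
      exact pow_lt_one₀ hx0' hx1 (Nat.succ_ne_zero n)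
    have h := Real.hasSum_pow_div_log_of_abs_lt_one hy
    convert h using 2 with k
    rw [hf]
    simp [pow_mul]
  have hL : HasSum (fun n : ℕ => -Real.log (1 - x ^ (n + 1))) (∑' p, f p) :=
    hsum.hasSum.prod_fiberwise hlog
  have hT : (∑' m : ℕ, (sigma1 (m + 1) : ℝ) / (m + 1) * x ^ (m + 1)) = ∑' p, f p := key.tsum_eq
  have h24 : HasSum (fun n : ℕ => (24 : ℝ) * Real.log (1 - x ^ (n + 1)))
      (-24 * ∑' p, f p) := by
    have := hL.mul_left (-24)
    simpa [neg_mul, mul_neg, neg_neg] using this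
  have hP := h24.rexp
  rw [hT]
  convert hP using 2 with n
  have hpos : (0:ℝ) < 1 - x ^ (n + 1) := by
    have h1 : x ^ (n + 1) < 1 := pow_lt_one₀ hx0' hx1 (n := n + 1) (Nat.succ_ne_zero n)
    linarith
  rw [Function.comp_apply,
    show (24 : ℝ) * Real.log (1 - x ^ (n + 1)) = Real.log ((1 - x ^ (n + 1)) ^ 24) by
      rw [Real.log_pow]; norm_num,
    Real.exp_log (by positivity)]
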